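/- Let β < 0 and σ(δ) = δ^{2β}(R-δ)^{N-1} with 0 < δ < δ₀ < R, N ≥ 1. Suppose v: (0, δ₀] → ℝ is bounded with |v| ≤ V, and v satisfies σ(δ)v'(δ) - σ(ε)v'(ε) = ∫_ε^δ σ(s)(v(s)^p s^{β(p-1)} + β(N-1)v(s)/((R-s)s)) ds for all 0 < ε < δ ≤ δ₀, where 0 < p < 1 and v > 0. Then |v'(ε)| ≤ c₁ ε^{-2β} + c₂ V^p ε^{1-β(1-p)} + c₃ V for constants c₁, c₂, c₃ independent of ε; in particular, since β < 0, v' is bounded on (0, δ₀] and lim_{δ→0} v(δ) exists and is finite. -/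

import Mathlib

theorem stmt_19 (N : ℕ) (hN : 1 ≤ N)
    (R δ₀ : ℝ) (hδ₀ : 0 < δ₀) (hR : δ₀ < R)
    (β : ℝ) (hβ : β < 0)
    (p : ℝ) (hp : 0 < p) (hp1 : p < 1)
    (σ : ℝ → ℝ) (hσ : σ = fun δ => δ ^ (2 * β) * (R - δ) ^ ((N:ℝ) - 1))
    (v : ℝ → ℝ) (V : ℝ)
    (hpos : ∀ δ ∈ Set.Ioc (0:ℝ) δ₀, 0 < v δ)
    (hbdd : ∀ δ ∈ Set.Ioc (0:ℝ) δ₀, |v δ| ≤ V)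
    (hdiff : ∀ δ ∈ Set.Ioc (0:ℝ) δ₀, DifferentiableAt ℝ v δ)
    (hint : ∀ ε δ : ℝ, 0 < ε → ε < δ → δ ≤ δ₀ →
      σ δ * deriv v δ - σ ε * deriv v ε
        = ∫ s in ε..δ,
            σ s * (v s ^ p * s ^ (β * (p - 1))
              + β * ((N:ℝ) - 1) * v s / ((R - s) * s))) :
    (∃ c₁ c₂ c₃ : ℝ, ∀ ε ∈ Set.Ioc (0:ℝ) δ₀,
        |deriv v ε| ≤ c₁ * ε ^ (-(2 * β)) + c₂ * V ^ p * ε ^ (1 - β * (1 - p)) + c₃ * V) ∧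
    (∃ B : ℝ, ∀ ε ∈ Set.Ioc (0:ℝ) δ₀, |deriv v ε| ≤ B) ∧
    (∃ l : ℝ, Filter.Tendsto v (nhdsWithin 0 (Set.Ioi 0)) (nhds l)) := by
  have hRδ₀ : (0:ℝ) < R - δ₀ := sub_pos.2 hR
  have hR0 : (0:ℝ) < R := hδ₀.trans hR
  have hN1 : (0:ℝ) ≤ (N:ℝ) - 1 := by
    have : (1:ℝ) ≤ (N:ℝ) := by exact_mod_cast hN
    linarith
  have hδ₀mem : δ₀ ∈ Set.Ioc (0:ℝ) δ₀ := ⟨hδ₀, le_rfl⟩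
  have hV : 0 < V := lt_of_lt_of_le (hpos δ₀ hδ₀mem) ((le_abs_self _).trans (hbdd δ₀ hδ₀mem))
  have he : (0:ℝ) < 1 - β * (1 - p) := by nlinarith
  -- constants
  set m : ℝ := (R - δ₀) ^ ((N:ℝ) - 1) with hm_def
  have hm : 0 < m := Real.rpow_pos_of_pos hRδ₀ _
  set A : ℝ := |σ δ₀ * deriv v δ₀| with hA_def
  have hA : 0 ≤ A := abs_nonneg _
  set K : ℝ := R ^ ((N:ℝ) - 1) * (V ^ p * δ₀ ^ (1 - β * (1 - p))
      + (-β) * ((N:ℝ) - 1) * V / (R - δ₀)) with hK_def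
  have hK : 0 ≤ K := by
    have h1 : (0:ℝ) < V ^ p := Real.rpow_pos_of_pos hV p
    have h2 : (0:ℝ) < δ₀ ^ (1 - β * (1 - p)) := Real.rpow_pos_of_pos hδ₀ _
    have h3 : (0:ℝ) < R ^ ((N:ℝ) - 1) := Real.rpow_pos_of_pos hR0 _
    have h4 : 0 ≤ (-β) * ((N:ℝ) - 1) * V / (R - δ₀) := by
      apply div_nonneg _ hRδ₀.le
      have : (0:ℝ) ≤ -β := by linarith
      positivity
    positivity
  clear_value m A K
  -- the main estimate
  have key : ∀ ε ∈ Set.Ioc (0:ℝ) δ₀, ε < δ₀ →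
      |deriv v ε| ≤ A / m * ε ^ (-(2 * β)) + K / ((-(2*β)) * m) := by
    intro ε hε hεδ
    have hε0 : (0:ℝ) < ε := hε.1
    have heq := hint ε δ₀ hε0 hεδ le_rfl
    -- pointwise bound on the integrand
    have hptwise : ∀ s ∈ Set.uIoc ε δ₀,
        ‖σ s * (v s ^ p * s ^ (β * (p - 1)) + β * ((N:ℝ) - 1) * v s / ((R - s) * s))‖
          ≤ K * s ^ (2*β - 1) := by
      intro s hs
      rw [Set.uIoc_of_le hεδ.le] at hs
      have hs0 : 0 < s := hε0.trans hs.1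
      have hsδ : s ≤ δ₀ := hs.2
      have hsm : s ∈ Set.Ioc (0:ℝ) δ₀ := ⟨hs0, hsδ⟩
      have hRs : 0 < R - s := by linarith
      have hvs : 0 < v s := hpos s hsm
      have hvV : v s ≤ V := (le_abs_self _).trans (hbdd s hsm)
      have hσs : σ s = s ^ (2*β) * (R - s) ^ ((N:ℝ) - 1) := by rw [hσ]
      have hσpos : 0 < σ s := by
        rw [hσs]; exact mul_pos (Real.rpow_pos_of_pos hs0 _) (Real.rpow_pos_of_pos hRs _)
      rw [Real.norm_eq_abs, abs_mul, abs_of_pos hσpos]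
      have habs : |v s ^ p * s ^ (β * (p - 1)) + β * ((N:ℝ) - 1) * v s / ((R - s) * s)|
          ≤ v s ^ p * s ^ (β * (p - 1)) + (-β) * ((N:ℝ) - 1) * v s / ((R - s) * s) := by
        refine (abs_add_le _ _).trans_eq ?_
        rw [abs_of_pos (mul_pos (Real.rpow_pos_of_pos hvs p) (Real.rpow_pos_of_pos hs0 _))]
        congr 1
        rw [abs_div, abs_mul, abs_mul, abs_of_neg hβ, abs_of_nonneg hN1,
          abs_of_pos hvs, abs_of_pos (mul_pos hRs hs0)]
      have hterm1 : σ s * (v s ^ p * s ^ (β * (p - 1)))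
          ≤ R ^ ((N:ℝ) - 1) * (V ^ p * δ₀ ^ (1 - β * (1 - p))) * s ^ (2*β - 1) := by
        rw [hσs]
        have hpow : s ^ (2*β) * s ^ (β * (p - 1)) = s ^ (2*β - 1) * s ^ (1 - β * (1 - p)) := by
          rw [← Real.rpow_add hs0, ← Real.rpow_add hs0]; ring_nf
        calc s ^ (2*β) * (R - s) ^ ((N:ℝ) - 1) * (v s ^ p * s ^ (β * (p - 1)))
            = s ^ (2*β - 1) * (s ^ (1 - β * (1 - p)) * ((R - s) ^ ((N:ℝ) - 1) * v s ^ p)) := by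
              rw [show s ^ (2*β) * (R - s) ^ ((N:ℝ) - 1) * (v s ^ p * s ^ (β * (p - 1)))
                  = (s ^ (2*β) * s ^ (β * (p - 1))) * ((R - s) ^ ((N:ℝ) - 1) * v s ^ p) by ring,
                hpow]
              ring
          _ ≤ s ^ (2*β - 1) * (δ₀ ^ (1 - β * (1 - p)) * (R ^ ((N:ℝ) - 1) * V ^ p)) := by
              have h1 : s ^ (1 - β * (1 - p)) ≤ δ₀ ^ (1 - β * (1 - p)) :=
                Real.rpow_le_rpow hs0.le hsδ he.le
              have h2 : (R - s) ^ ((N:ℝ) - 1) ≤ R ^ ((N:ℝ) - 1) :=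
                Real.rpow_le_rpow hRs.le (by linarith) hN1
              have h3 : v s ^ p ≤ V ^ p := Real.rpow_le_rpow hvs.le hvV hp.le
              have p1 := Real.rpow_pos_of_pos hs0 (2*β - 1)
              have p2 := Real.rpow_pos_of_pos hs0 (1 - β * (1 - p))
              have p3 := Real.rpow_pos_of_pos hRs ((N:ℝ) - 1)
              have p4 := Real.rpow_pos_of_pos hvs p
              gcongr
          _ = R ^ ((N:ℝ) - 1) * (V ^ p * δ₀ ^ (1 - β * (1 - p))) * s ^ (2*β - 1) := by ring
      have hterm2 : σ s * ((-β) * ((N:ℝ) - 1) * v s / ((R - s) * s))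
          ≤ R ^ ((N:ℝ) - 1) * ((-β) * ((N:ℝ) - 1) * V / (R - δ₀)) * s ^ (2*β - 1) := by
        rw [hσs]
        have hpow : s ^ (2*β) * s⁻¹ = s ^ (2*β - 1) := by
          rw [show (2*β - 1 : ℝ) = 2*β + (-1) by ring, Real.rpow_add hs0, Real.rpow_neg_one]
        have hβ' : (0:ℝ) ≤ -β := by linarith
        calc s ^ (2*β) * (R - s) ^ ((N:ℝ) - 1) * ((-β) * ((N:ℝ) - 1) * v s / ((R - s) * s))
            = ((-β) * ((N:ℝ) - 1)) * (v s * ((R - s) ^ ((N:ℝ) - 1) * (R - s)⁻¹))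
                * (s ^ (2*β) * s⁻¹) := by
              rw [div_eq_mul_inv, mul_inv]
              ring
          _ = ((-β) * ((N:ℝ) - 1)) * (v s * ((R - s) ^ ((N:ℝ) - 1) * (R - s)⁻¹))
                * s ^ (2*β - 1) := by rw [hpow]
          _ ≤ ((-β) * ((N:ℝ) - 1)) * (V * (R ^ ((N:ℝ) - 1) * (R - δ₀)⁻¹)) * s ^ (2*β - 1) := by
              have h2 : (R - s) ^ ((N:ℝ) - 1) ≤ R ^ ((N:ℝ) - 1) :=
                Real.rpow_le_rpow hRs.le (by linarith) hN1
              have h4 : (R - s)⁻¹ ≤ (R - δ₀)⁻¹ := by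
                apply inv_anti₀ hRδ₀; linarith
              have p1 := Real.rpow_pos_of_pos hs0 (2*β - 1)
              have p3 := Real.rpow_pos_of_pos hRs ((N:ℝ) - 1)
              gcongr
              all_goals first
                | exact mul_nonneg hβ' hN1
                | exact hvs.le
                | positivity
          _ = R ^ ((N:ℝ) - 1) * ((-β) * ((N:ℝ) - 1) * V / (R - δ₀)) * s ^ (2*β - 1) := by
              rw [div_eq_mul_inv]; ring
      calc σ s * |v s ^ p * s ^ (β * (p - 1)) + β * ((N:ℝ) - 1) * v s / ((R - s) * s)|
          ≤ σ s * (v s ^ p * s ^ (β * (p - 1)) + (-β) * ((N:ℝ) - 1) * v s / ((R - s) * s)) :=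
            mul_le_mul_of_nonneg_left habs hσpos.le
        _ = σ s * (v s ^ p * s ^ (β * (p - 1)))
            + σ s * ((-β) * ((N:ℝ) - 1) * v s / ((R - s) * s)) := by ring
        _ ≤ R ^ ((N:ℝ) - 1) * (V ^ p * δ₀ ^ (1 - β * (1 - p))) * s ^ (2*β - 1)
            + R ^ ((N:ℝ) - 1) * ((-β) * ((N:ℝ) - 1) * V / (R - δ₀)) * s ^ (2*β - 1) :=
            add_le_add hterm1 hterm2
        _ = K * s ^ (2*β - 1) := by rw [hK_def]; ring
    -- integrability of the majorant
    have hg_int : IntervalIntegrable (fun s => K * s ^ (2*β - 1)) MeasureTheory.volume ε δ₀ := by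
      apply ContinuousOn.intervalIntegrable
      rw [Set.uIcc_of_le hεδ.le]
      exact continuousOn_const.mul (fun s hs =>
        (Real.continuousAt_rpow_const s _
          (Or.inl (ne_of_gt (hε0.trans_le hs.1)))).continuousWithinAt)
    -- bound on the integral
    have hint_bound : ‖∫ s in ε..δ₀,
        σ s * (v s ^ p * s ^ (β * (p - 1)) + β * ((N:ℝ) - 1) * v s / ((R - s) * s))‖
        ≤ |∫ s in ε..δ₀, K * s ^ (2*β - 1)| := by
      apply intervalIntegral.norm_integral_le_abs_of_norm_le _ hg_int
      exact (MeasureTheory.ae_restrict_iff' measurableSet_uIoc).2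
        (Filter.Eventually.of_forall hptwise)
    have hint_val : |∫ s in ε..δ₀, K * s ^ (2*β - 1)| ≤ K * ε ^ (2*β) / (-(2*β)) := by
      rw [intervalIntegral.integral_const_mul]
      have h0 : (0:ℝ) ∉ Set.uIcc ε δ₀ := by
        rw [Set.uIcc_of_le hεδ.le]
        intro h
        exact absurd h.1 (by linarith)
      rw [integral_rpow (Or.inr ⟨by intro h; linarith, h0⟩)]
      have h1 : 2*β - 1 + 1 = 2*β := by ring
      rw [h1]
      have hεpow : (0:ℝ) < ε ^ (2*β) := Real.rpow_pos_of_pos hε0 _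
      have hδpow : (0:ℝ) < δ₀ ^ (2*β) := Real.rpow_pos_of_pos hδ₀ _
      have hδε : δ₀ ^ (2*β) ≤ ε ^ (2*β) :=
        Real.rpow_le_rpow_of_nonpos hε0 hεδ.le (by linarith)
      have hrw : (δ₀ ^ (2*β) - ε ^ (2*β))/(2*β) = (ε ^ (2*β) - δ₀ ^ (2*β))/(-(2*β)) := by
        ring
      rw [hrw, abs_of_nonneg (mul_nonneg hK (div_nonneg (by linarith) (by linarith))),
        mul_div_assoc]
      gcongr
      · linarith
      · linarith
    -- conclude
    have hσε : σ ε = ε ^ (2*β) * (R - ε) ^ ((N:ℝ) - 1) := by rw [hσ]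
    have hεpow : (0:ℝ) < ε ^ (2*β) := Real.rpow_pos_of_pos hε0 _
    have hσε_lb : m * ε ^ (2*β) ≤ σ ε := by
      rw [hσε, hm_def, mul_comm]
      have : (R - δ₀) ^ ((N:ℝ) - 1) ≤ (R - ε) ^ ((N:ℝ) - 1) :=
        Real.rpow_le_rpow hRδ₀.le (by linarith) hN1
      exact mul_le_mul_of_nonneg_left this hεpow.le
    have hσε_pos : 0 < σ ε := lt_of_lt_of_le (mul_pos hm hεpow) hσε_lb
    have hmain : σ ε * |deriv v ε| ≤ A + K * ε ^ (2*β) / (-(2*β)) := by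
      have h1 : σ ε * deriv v ε = σ δ₀ * deriv v δ₀ - ∫ s in ε..δ₀,
          σ s * (v s ^ p * s ^ (β * (p - 1)) + β * ((N:ℝ) - 1) * v s / ((R - s) * s)) := by
        linarith [heq]
      calc σ ε * |deriv v ε| = |σ ε * deriv v ε| := by
            rw [abs_mul, abs_of_pos hσε_pos]
        _ ≤ A + ‖∫ s in ε..δ₀,
              σ s * (v s ^ p * s ^ (β * (p - 1)) + β * ((N:ℝ) - 1) * v s / ((R - s) * s))‖ := by
            rw [h1, hA_def, Real.norm_eq_abs]
            exact abs_sub _ _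
        _ ≤ A + K * ε ^ (2*β) / (-(2*β)) :=
            add_le_add le_rfl (hint_bound.trans hint_val)
    have hx : |deriv v ε| ≤ (A + K * ε ^ (2*β) / (-(2*β))) / (m * ε ^ (2*β)) := by
      rw [le_div_iff₀ (by positivity)]
      calc |deriv v ε| * (m * ε ^ (2*β)) ≤ |deriv v ε| * σ ε :=
            mul_le_mul_of_nonneg_left hσε_lb (abs_nonneg _)
        _ = σ ε * |deriv v ε| := mul_comm _ _
        _ ≤ _ := hmain
    refine hx.trans (le_of_eq ?_)
    rw [Real.rpow_neg hε0.le]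
    have hm0 : m ≠ 0 := ne_of_gt hm
    have ht0 : ε ^ (2*β) ≠ 0 := ne_of_gt hεpow
    have hb0 : (2*β) ≠ 0 := by linarith
    have hβne : β ≠ 0 := ne_of_lt hβ
    field_simp
  -- global bound including ε = δ₀
  set c₁ : ℝ := A / m + |deriv v δ₀| * δ₀ ^ (2*β) with hc₁_def
  set C : ℝ := K / ((-(2*β)) * m) with hC_def
  have hδpow : (0:ℝ) < δ₀ ^ (2*β) := Real.rpow_pos_of_pos hδ₀ _
  have hc₁0 : 0 ≤ c₁ := add_nonneg (div_nonneg hA hm.le)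
    (mul_nonneg (abs_nonneg _) hδpow.le)
  have hC0 : 0 ≤ C := div_nonneg hK (mul_nonneg (by linarith) hm.le)
  clear_value c₁ C
  have bound : ∀ ε ∈ Set.Ioc (0:ℝ) δ₀, |deriv v ε| ≤ c₁ * ε ^ (-(2*β)) + C := by
    intro ε hε
    rcases lt_or_eq_of_le hε.2 with h | h
    · refine (key ε hε h).trans ?_
      have h1 : A/m * ε ^ (-(2*β)) ≤ c₁ * ε ^ (-(2*β)) := by
        apply mul_le_mul_of_nonneg_right _ (Real.rpow_pos_of_pos hε.1 _).le
        rw [hc₁_def]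
        have := mul_nonneg (abs_nonneg (deriv v δ₀)) hδpow.le
        linarith
      rw [hC_def]
      linarith
    · rw [h]
      have h2 : δ₀ ^ (2*β) * δ₀ ^ (-(2*β)) = 1 := by
        rw [← Real.rpow_add hδ₀]; simp
      have h3 : c₁ * δ₀ ^ (-(2*β))
          = A/m * δ₀ ^ (-(2*β)) + |deriv v δ₀| * (δ₀ ^ (2*β) * δ₀ ^ (-(2*β))) := by
        rw [hc₁_def]; ring
      rw [h3, h2]
      have h4 : 0 ≤ A/m * δ₀ ^ (-(2*β)) :=
        mul_nonneg (div_nonneg hA hm.le) (Real.rpow_pos_of_pos hδ₀ _).le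
      linarith
  refine ⟨⟨c₁, 0, C / V, ?_⟩, ⟨c₁ * δ₀ ^ (-(2*β)) + C, ?_⟩, ?_⟩
  · intro ε hε
    have := bound ε hε
    rw [zero_mul, zero_mul, div_mul_cancel₀ _ (ne_of_gt hV)]
    linarith
  · intro ε hε
    have h1 := bound ε hε
    have h2 : ε ^ (-(2*β)) ≤ δ₀ ^ (-(2*β)) :=
      Real.rpow_le_rpow hε.1.le hε.2 (by linarith)
    linarith [mul_le_mul_of_nonneg_left h2 hc₁0]
  · -- Lipschitz extension
    set B : ℝ := c₁ * δ₀ ^ (-(2*β)) + C with hB_def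
    have hB : ∀ x ∈ Set.Ioc (0:ℝ) δ₀, |deriv v x| ≤ B := by
      intro x hx
      have h1 := bound x hx
      have h2 : x ^ (-(2*β)) ≤ δ₀ ^ (-(2*β)) :=
        Real.rpow_le_rpow hx.1.le hx.2 (by linarith)
      linarith [mul_le_mul_of_nonneg_left h2 hc₁0]
    have hlip : LipschitzOnWith B.toNNReal v (Set.Ioc (0:ℝ) δ₀) := by
      apply Convex.lipschitzOnWith_of_nnnorm_deriv_le hdiff _ (convex_Ioc _ _)
      intro x hx
      rw [← NNReal.coe_le_coe, coe_nnnorm, Real.norm_eq_abs, Real.coe_toNNReal']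
      exact (hB x hx).trans (le_max_left _ _)
    obtain ⟨g, hg, heqg⟩ := hlip.extend_real
    refine ⟨g 0, ?_⟩
    have htend : Filter.Tendsto g (nhdsWithin 0 (Set.Ioi 0)) (nhds (g 0)) :=
      (hg.continuous.tendsto 0).mono_left nhdsWithin_le_nhds
    refine htend.congr' ?_
    have hmem : Set.Ioc (0:ℝ) δ₀ ∈ nhdsWithin 0 (Set.Ioi 0) := by
      apply mem_nhdsWithin.2 ⟨Set.Iio δ₀, isOpen_Iio, hδ₀, ?_⟩
      intro x hx
      exact ⟨hx.2, le_of_lt hx.1⟩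
    filter_upwards [hmem] with x hx using (heqg hx).symm
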